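/- Let a be a nonzero integer. Then the chain (−3a²−a, a, −a) ↔ (a, a, −a) ↔ (a, a, 3a²+a) ↔ (9a³+3a²−a, a, 3a²+a) holds, where each consecutive pair is linked by a single Vieta move; moreover |a| < |3a² + a| < |3a(3a²+a) − a|, so the two end triples each satisfy the hypotheses 0 < |x| ≤ |y| < |z| of the norm-increase lemma after ordering by absolute value. -/
import Mathlib


/-- A Vieta move on an unordered triple (multiset of size 3) `{a,b,c}`
replaces one entry, e.g. `a`, by `3bc − a`. -/
def VietaMove (s t : Multiset ℤ) : Prop :=
  ∃ a b c : ℤ, s = {a, b, c} ∧ t = {3 * b * c - a, b, c}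

/-- For a nonzero integer `a`, the chain
`(−3a²−a, a, −a) ↔ (a, a, −a) ↔ (a, a, 3a²+a) ↔ (9a³+3a²−a, a, 3a²+a)` holds,
each consecutive pair being linked by a single Vieta move; moreover
`|a| < |3a² + a| < |3a(3a²+a) − a|`. -/
theorem class_six_special_chain (a : ℤ) (ha : a ≠ 0) :
    VietaMove {-(3 * a ^ 2) - a, a, -a} {a, a, -a} ∧
    VietaMove {a, a, -a} {a, a, 3 * a ^ 2 + a} ∧
    VietaMove {a, a, 3 * a ^ 2 + a} {9 * a ^ 3 + 3 * a ^ 2 - a, a, 3 * a ^ 2 + a} ∧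
    |a| < |3 * a ^ 2 + a| ∧
    |3 * a ^ 2 + a| < |3 * a * (3 * a ^ 2 + a) - a| := by
  have hrot : ∀ x y z : ℤ, ({x, y, z} : Multiset ℤ) = {y, z, x} := by
    intro x y z
    show x ::ₘ y ::ₘ z ::ₘ 0 = y ::ₘ z ::ₘ x ::ₘ 0
    rw [Multiset.cons_swap x y, Multiset.cons_swap x z]
  refine ⟨⟨-(3 * a ^ 2) - a, a, -a, rfl, ?_⟩,
          ⟨-a, a, a, (hrot (-a) a a).symm, ?_⟩,
          ⟨a, a, 3 * a ^ 2 + a, rfl, ?_⟩, ?_, ?_⟩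
  · congr 1; ring
  · rw [show 3 * a * a - -a = 3 * a ^ 2 + a by ring]
    exact (hrot (3 * a ^ 2 + a) a a).symm
  · congr 1; ring
  · rcases lt_or_gt_of_ne ha with h | h <;>
    rcases abs_cases (3 * a ^ 2 + a) with ⟨h1, _⟩ | ⟨h1, _⟩ <;>
    [rw [abs_of_neg h]; rw [abs_of_neg h]; rw [abs_of_pos h]; rw [abs_of_pos h]] <;>
    nlinarith
  · rcases lt_or_gt_of_ne ha with h | h <;>
    rcases abs_cases (3 * a ^ 2 + a) with ⟨h1, _⟩ | ⟨h1, _⟩ <;>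
    rcases abs_cases (3 * a * (3 * a ^ 2 + a) - a) with ⟨h2, _⟩ | ⟨h2, _⟩ <;>
    nlinarith
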